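/- Let 2√2/3 ≤ λ ≤ 1 and let T be a non-obtuse Euclidean triangle with all side lengths at least 2 and at least two altitudes of length at least 2λ. Then the circumradius of T is at least 3√3·λ/4, with equality if and only if T is congruent to the isosceles triangle with legs of length 3λ/√2 and base of length √6·λ. -/

import Mathlib

set_option maxHeartbeats 1000000

open Real Metric

private lemma sqEqOfSq {a b : ℝ} (ha : 0 ≤ a) (hb : 0 ≤ b) (h : a ^ 2 = b ^ 2) : a = b := by
  rw [← Real.sqrt_sq ha, h, Real.sqrt_sq hb]

private lemma keyTrig {α β γ : ℝ} (hα : 0 < α) (hβ : 0 < β)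
    (hγ : 0 < γ) (hγπ : γ < π) (hsum : α + β + γ = π)
    (h1 : 4 * Real.sqrt 3 / 9 ≤ Real.sin γ * Real.sin α)
    (h2 : 4 * Real.sqrt 3 / 9 ≤ Real.sin γ * Real.sin β) :
    Real.sin α = Real.sqrt 6 / 3 ∧ Real.sin β = Real.sqrt 6 / 3 ∧
      Real.sin γ = 2 * Real.sqrt 2 / 3 := by
  have s3 : Real.sqrt 3 ^ 2 = 3 := Real.sq_sqrt (by norm_num)
  have s3p : 0 < Real.sqrt 3 := Real.sqrt_pos.2 (by norm_num)
  have s2 : Real.sqrt 2 ^ 2 = 2 := Real.sq_sqrt (by norm_num)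
  have s2p : 0 < Real.sqrt 2 := Real.sqrt_pos.2 (by norm_num)
  have s6 : Real.sqrt 6 ^ 2 = 6 := Real.sq_sqrt (by norm_num)
  have s6p : 0 < Real.sqrt 6 := Real.sqrt_pos.2 (by norm_num)
  have h63 : Real.sqrt 6 * Real.sqrt 3 = 3 * Real.sqrt 2 := by
    apply sqEqOfSq (by positivity) (by positivity); nlinarith
  have h23 : Real.sqrt 2 * Real.sqrt 3 = Real.sqrt 6 := by
    apply sqEqOfSq (by positivity) (by positivity); nlinarith
  set s : ℝ := (α + β) / 2 with hsdef
  have hs0 : 0 < s := by rw [hsdef]; linarith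
  have hs2 : s < π / 2 := by rw [hsdef]; linarith
  have hpi : 0 < π := Real.pi_pos
  have hsins : 0 < Real.sin s := Real.sin_pos_of_pos_of_lt_pi hs0 (by linarith)
  have hcoss : 0 < Real.cos s := Real.cos_pos_of_mem_Ioo ⟨by linarith, hs2⟩
  have hγeq : γ = π - 2 * s := by rw [hsdef]; linarith
  have hsinγ : Real.sin γ = 2 * Real.sin s * Real.cos s := by
    rw [hγeq, Real.sin_pi_sub, Real.sin_two_mul]
  have hsum2 : Real.sin α + Real.sin β = 2 * Real.sin s * Real.cos ((α - β) / 2) := by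
    have h1 := Real.sin_add s ((α - β) / 2)
    have h2 := Real.sin_sub s ((α - β) / 2)
    have e1 : s + (α - β) / 2 = α := by rw [hsdef]; ring
    have e2 : s - (α - β) / 2 = β := by rw [hsdef]; ring
    rw [e1] at h1
    rw [e2] at h2
    rw [h1, h2]
    ring
  have hcosd : Real.cos ((α - β) / 2) ≤ 1 := Real.cos_le_one _
  have hsumle : Real.sin α + Real.sin β ≤ 2 * Real.sin s := by nlinarith
  have hsinγpos : 0 < Real.sin γ := Real.sin_pos_of_pos_of_lt_pi hγ hγπ
  have hbig : 8 * Real.sqrt 3 / 9 ≤ 4 * Real.sin s ^ 2 * Real.cos s := by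
    have hA : 8 * Real.sqrt 3 / 9 ≤ Real.sin γ * (Real.sin α + Real.sin β) := by nlinarith
    have hB : Real.sin γ * (Real.sin α + Real.sin β) ≤ Real.sin γ * (2 * Real.sin s) :=
      mul_le_mul_of_nonneg_left hsumle hsinγpos.le
    rw [hsinγ] at hB
    nlinarith
  have hpy : Real.sin s ^ 2 = 1 - Real.cos s ^ 2 := Real.sin_sq s
  have hcs : Real.cos s = Real.sqrt 3 / 3 := by
    have hbig' : 8 * Real.sqrt 3 / 9 ≤ 4 * (1 - Real.cos s ^ 2) * Real.cos s := by
      rw [← hpy]; exact hbig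
    have hineq : 4 * Real.sqrt 3 / 9 ≤ 2 * Real.cos s - 2 * Real.cos s ^ 3 := by nlinarith [hbig']
    have hfac : (Real.cos s - Real.sqrt 3 / 3) ^ 2 * (2 * Real.cos s + 4 * Real.sqrt 3 / 3)
        = 4 * Real.sqrt 3 / 9 - (2 * Real.cos s - 2 * Real.cos s ^ 3) := by
      linear_combination (4 / 27 * Real.sqrt 3 - 2 / 3 * Real.cos s) * s3
    have hposf : 0 < 2 * Real.cos s + 4 * Real.sqrt 3 / 3 := by positivity
    have hsqle : (Real.cos s - Real.sqrt 3 / 3) ^ 2 ≤ 0 := by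
      rcases le_or_gt ((Real.cos s - Real.sqrt 3 / 3) ^ 2) 0 with h | h
      · exact h
      · exfalso; nlinarith [mul_pos h hposf]
    have h0 : (Real.cos s - Real.sqrt 3 / 3) ^ 2 = 0 := le_antisymm hsqle (sq_nonneg _)
    have := pow_eq_zero_iff (by norm_num : (2 : ℕ) ≠ 0) |>.1 h0
    linarith [sub_eq_zero.1 this]
  have hss : Real.sin s = Real.sqrt 6 / 3 := by
    apply sqEqOfSq hsins.le (by positivity)
    rw [hpy, hcs]; nlinarith
  have hsinγval : Real.sin γ = 2 * Real.sqrt 2 / 3 := by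
    rw [hsinγ, hss, hcs]; linear_combination (2 / 9) * h63
  have hαlb : Real.sqrt 6 / 3 ≤ Real.sin α := by
    have h1' : 4 * Real.sqrt 3 / 9 ≤ 2 * Real.sqrt 2 / 3 * Real.sin α := by
      rw [← hsinγval]; exact h1
    nlinarith [mul_le_mul_of_nonneg_left h1' s2p.le]
  have hβlb : Real.sqrt 6 / 3 ≤ Real.sin β := by
    have h2' : 4 * Real.sqrt 3 / 9 ≤ 2 * Real.sqrt 2 / 3 * Real.sin β := by
      rw [← hsinγval]; exact h2
    nlinarith [mul_le_mul_of_nonneg_left h2' s2p.le]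
  have hsum3 : Real.sin α + Real.sin β ≤ 2 * Real.sqrt 6 / 3 := by
    rw [hss] at hsumle; linarith
  exact ⟨by linarith, by linarith, hsinγval⟩

private lemma absAngleSin {V : Type*} {P : Type*} [NormedAddCommGroup V] [InnerProductSpace ℝ V]
    [MetricSpace P] [NormedAddTorsor V P] [Module.Oriented ℝ V (Fin 2)]
    [Fact (Module.finrank ℝ V = 2)] {p₁ p p₂ : P} (h1 : p₁ ≠ p) (h2 : p₂ ≠ p) :
    |Real.Angle.sin (EuclideanGeometry.oangle p₁ p p₂)|
      = Real.sin (EuclideanGeometry.angle p₁ p p₂) := by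
  rw [EuclideanGeometry.angle_eq_abs_oangle_toReal h1 h2]
  have key : ∀ θ : Real.Angle, |θ.sin| = Real.sin |θ.toReal| := by
    intro θ
    set x := θ.toReal with hx
    have hθ : θ = (x : Real.Angle) := (Real.Angle.coe_toReal θ).symm
    have hl : -π < x := Real.Angle.neg_pi_lt_toReal θ
    have hu : x ≤ π := Real.Angle.toReal_le_pi θ
    rw [hθ, Real.Angle.sin_coe]
    rcases le_or_gt 0 x with h | h
    · rw [abs_of_nonneg h, abs_of_nonneg (Real.sin_nonneg_of_nonneg_of_le_pi h hu)]
    · have h1' : 0 ≤ Real.sin (-x) :=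
        Real.sin_nonneg_of_nonneg_of_le_pi (by linarith) (by linarith)
      rw [Real.sin_neg] at h1'
      rw [abs_of_neg h, Real.sin_neg, abs_of_nonpos (by linarith)]
  exact key _

private lemma infDistLine {V : Type*} [NormedAddCommGroup V] [InnerProductSpace ℝ V]
    (Pt A C : V) (hAC : A ≠ C) :
    infDist Pt (affineSpan ℝ ({A, C} : Set V) : Set V)
      = dist Pt A * Real.sin (EuclideanGeometry.angle Pt A C) := by
  set u : V := Pt -ᵥ A with hu
  set v : V := C -ᵥ A with hv
  have hv0 : v ≠ 0 := vsub_ne_zero.2 (Ne.symm hAC)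
  have hvn : (0 : ℝ) < ‖v‖ := norm_pos_iff.2 hv0
  have hang : EuclideanGeometry.angle Pt A C = InnerProductGeometry.angle u v := rfl
  have hPA : dist Pt A = ‖u‖ := by rw [hu, dist_eq_norm_vsub V]
  have hdist : ∀ t : ℝ, dist Pt (t • v +ᵥ A) ^ 2
      = ‖u‖ ^ 2 - 2 * t * (inner ℝ u v : ℝ) + t ^ 2 * ‖v‖ ^ 2 := by
    intro t
    rw [dist_eq_norm_vsub V, vsub_vadd_eq_vsub_sub, ← hu, @norm_sub_sq_real,
      real_inner_smul_right, norm_smul, Real.norm_eq_abs, mul_pow, sq_abs]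
    ring
  have hCS : (inner ℝ u v : ℝ) ^ 2 ≤ ‖u‖ ^ 2 * ‖v‖ ^ 2 := by
    have h := abs_real_inner_le_norm u v
    have h2 := abs_nonneg (inner ℝ u v : ℝ)
    nlinarith [sq_abs (inner ℝ u v : ℝ)]
  set D : ℝ := dist Pt A * Real.sin (InnerProductGeometry.angle u v) with hD
  have hD0 : 0 ≤ D := mul_nonneg dist_nonneg (Real.sin_nonneg_of_nonneg_of_le_pi
    (InnerProductGeometry.angle_nonneg u v) (InnerProductGeometry.angle_le_pi u v))
  have hDsq : D ^ 2 = ‖u‖ ^ 2 - (inner ℝ u v : ℝ) ^ 2 / ‖v‖ ^ 2 := by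
    have hs := InnerProductGeometry.sin_angle_mul_norm_mul_norm u v
    rw [real_inner_self_eq_norm_sq, real_inner_self_eq_norm_sq] at hs
    have hX0 : (0 : ℝ) ≤ ‖u‖ ^ 2 * ‖v‖ ^ 2 - (inner ℝ u v : ℝ) * (inner ℝ u v : ℝ) := by nlinarith
    have hsq : (Real.sin (InnerProductGeometry.angle u v) * (‖u‖ * ‖v‖)) ^ 2
        = ‖u‖ ^ 2 * ‖v‖ ^ 2 - (inner ℝ u v : ℝ) * (inner ℝ u v : ℝ) := by
      rw [hs, Real.sq_sqrt hX0]
    rw [hD, hPA]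
    have hvne : (‖v‖ : ℝ) ≠ 0 := ne_of_gt hvn
    field_simp
    linear_combination hsq
  have hmemA : A ∈ (affineSpan ℝ ({A, C} : Set V) : Set V) :=
    SetLike.mem_coe.2 (left_mem_affineSpan_pair ℝ A C)
  have hlow : ∀ y ∈ (affineSpan ℝ ({A, C} : Set V) : Set V), D ≤ dist Pt y := by
    intro y hy
    obtain ⟨t, ht⟩ : ∃ r : ℝ, r • (C -ᵥ A) = y -ᵥ A := by
      have hy' : y ∈ line[ℝ, A, C] := SetLike.mem_coe.1 hy
      have hy2 : (y -ᵥ A) +ᵥ A ∈ line[ℝ, A, C] := by rwa [vsub_vadd]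
      exact vadd_left_mem_affineSpan_pair.1 hy2
    have hy2 : y = t • v +ᵥ A := by rw [hv, ht, vsub_vadd]
    have h2 : D ^ 2 ≤ dist Pt y ^ 2 := by
      rw [hy2, hdist t, hDsq]
      have hkey : 0 ≤ (t * ‖v‖ - (inner ℝ u v : ℝ) / ‖v‖) ^ 2 := sq_nonneg _
      have hexp : (t * ‖v‖ - (inner ℝ u v : ℝ) / ‖v‖) ^ 2
          = t ^ 2 * ‖v‖ ^ 2 - 2 * t * (inner ℝ u v : ℝ) + (inner ℝ u v : ℝ) ^ 2 / ‖v‖ ^ 2 := by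
        field_simp
        ring
      nlinarith [hkey, hexp]
    calc D = Real.sqrt (D ^ 2) := (Real.sqrt_sq hD0).symm
      _ ≤ Real.sqrt (dist Pt y ^ 2) := Real.sqrt_le_sqrt h2
      _ = dist Pt y := Real.sqrt_sq dist_nonneg
  have hq0mem : ((inner ℝ u v : ℝ) / ‖v‖ ^ 2) • v +ᵥ A ∈ (affineSpan ℝ ({A, C} : Set V) : Set V) :=
    SetLike.mem_coe.2 (smul_vsub_vadd_mem_affineSpan_pair ((inner ℝ u v : ℝ) / ‖v‖ ^ 2) A C)
  have hq0 : dist Pt (((inner ℝ u v : ℝ) / ‖v‖ ^ 2) • v +ᵥ A) = D := by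
    apply sqEqOfSq dist_nonneg hD0
    rw [hdist, hDsq]
    field_simp
    ring
  rw [hang, ← hD]
  apply le_antisymm
  · rw [← hq0]; exact infDist_le_dist_of_mem hq0mem
  · by_contra hlt
    push_neg at hlt
    obtain ⟨y, hy, hyd⟩ := (infDist_lt_iff ⟨A, hmemA⟩).1 hlt
    exact absurd hyd (not_lt.2 (hlow y hy))

/-- For `2√2/3 ≤ λ ≤ 1`: a non-obtuse triangle (one containing its circumcenter)
with side lengths at least `2` and at least two altitudes of length at least `2λ` has
circumradius at least `3√3·λ/4`, with equality iff the triangle is congruent to the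
isosceles triangle with legs `3λ/√2` and base `√6·λ`. -/
theorem stmt11 (l : ℝ) (hl0 : 2 * Real.sqrt 2 / 3 ≤ l) (hl : l ≤ 1)
    (s : Affine.Simplex ℝ (EuclideanSpace ℝ (Fin 2)) 2)
    (hcc : s.circumcenter ∈ convexHull ℝ (Set.range s.points))
    (hside : ∀ i j : Fin 3, i ≠ j → 2 ≤ dist (s.points i) (s.points j))
    (halt : ∃ i j : Fin 3, i ≠ j ∧
      2 * l ≤ infDist (s.points i) (affineSpan ℝ (s.points '' {i}ᶜ) : Set (EuclideanSpace ℝ (Fin 2))) ∧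
      2 * l ≤ infDist (s.points j) (affineSpan ℝ (s.points '' {j}ᶜ) : Set (EuclideanSpace ℝ (Fin 2)))) :
    3 * Real.sqrt 3 * l / 4 ≤ s.circumradius ∧
    (s.circumradius = 3 * Real.sqrt 3 * l / 4 ↔
      ∃ i j k : Fin 3, i ≠ j ∧ i ≠ k ∧ j ≠ k ∧
        dist (s.points i) (s.points j) = 3 * l / Real.sqrt 2 ∧
        dist (s.points i) (s.points k) = 3 * l / Real.sqrt 2 ∧
        dist (s.points j) (s.points k) = Real.sqrt 6 * l) := by
  haveI : Fact (Module.finrank ℝ (EuclideanSpace ℝ (Fin 2)) = 2) := ⟨finrank_euclideanSpace_fin⟩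
  haveI : Module.Oriented ℝ (EuclideanSpace ℝ (Fin 2)) (Fin 2) :=
    ⟨(EuclideanSpace.basisFun (Fin 2) ℝ).toBasis.orientation⟩
  have s3 : Real.sqrt 3 ^ 2 = 3 := Real.sq_sqrt (by norm_num)
  have s3p : 0 < Real.sqrt 3 := Real.sqrt_pos.2 (by norm_num)
  have s2 : Real.sqrt 2 ^ 2 = 2 := Real.sq_sqrt (by norm_num)
  have s2p : 0 < Real.sqrt 2 := Real.sqrt_pos.2 (by norm_num)
  have s6 : Real.sqrt 6 ^ 2 = 6 := Real.sq_sqrt (by norm_num)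
  have s6p : 0 < Real.sqrt 6 := Real.sqrt_pos.2 (by norm_num)
  have h63 : Real.sqrt 6 * Real.sqrt 3 = 3 * Real.sqrt 2 := by
    apply sqEqOfSq (by positivity) (by positivity); nlinarith
  have h23 : Real.sqrt 2 * Real.sqrt 3 = Real.sqrt 6 := by
    apply sqEqOfSq (by positivity) (by positivity); nlinarith
  have h26 : Real.sqrt 2 * Real.sqrt 6 = 2 * Real.sqrt 3 := by
    apply sqEqOfSq (by positivity) (by positivity); nlinarith
  have hlpos : 0 < l := lt_of_lt_of_le (by positivity) hl0
  have hinj := s.independent.injective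
  set R := s.circumradius with hR
  -- law of sines
  have lawsin : ∀ a b c : Fin 3, a ≠ b → a ≠ c → b ≠ c →
      dist (s.points a) (s.points c)
        = 2 * R * Real.sin (EuclideanGeometry.angle (s.points a) (s.points b) (s.points c)) := by
    intro a b c hab hac hbc
    have hncol : ¬ Collinear ℝ ({s.points a, s.points b, s.points c} :
        Set (EuclideanSpace ℝ (Fin 2))) :=
      (affineIndependent_iff_not_collinear_of_ne hab hac hbc).1 s.independent
    have hsin0 := EuclideanGeometry.sin_ne_zero_of_not_collinear hncol
    have h := Affine.Triangle.dist_div_sin_oangle_eq_two_mul_circumradius s hab hac hbc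
    rw [absAngleSin (hinj.ne hab) (hinj.ne (Ne.symm hbc))] at h
    exact (div_eq_iff hsin0).1 h
  -- altitude formula
  have haltEq : ∀ a b c : Fin 3, b ≠ c → ({a}ᶜ : Set (Fin 3)) = {b, c} →
      infDist (s.points a) (affineSpan ℝ (s.points '' {a}ᶜ) : Set (EuclideanSpace ℝ (Fin 2)))
        = dist (s.points a) (s.points b) *
          Real.sin (EuclideanGeometry.angle (s.points a) (s.points b) (s.points c)) := by
    intro a b c hbc hset
    rw [hset, Set.image_insert_eq, Set.image_singleton]
    exact infDistLine (s.points a) (s.points b) (s.points c) (hinj.ne hbc)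
  -- get the two altitude indices and the third one
  obtain ⟨i, j, hij, hAi, hAj⟩ := halt
  have hfin : ∀ i j : Fin 3, i ≠ j → ∃ k, i ≠ k ∧ j ≠ k ∧
      (∀ x : Fin 3, x ≠ i ↔ (x = j ∨ x = k)) ∧ (∀ x : Fin 3, x ≠ j ↔ (x = i ∨ x = k)) := by
    decide
  obtain ⟨k, hik, hjk, hci, hcj⟩ := hfin i j hij
  have hset_i : ({i}ᶜ : Set (Fin 3)) = {j, k} := by
    ext x
    simp only [Set.mem_compl_iff, Set.mem_singleton_iff, Set.mem_insert_iff]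
    exact hci x
  have hset_j : ({j}ᶜ : Set (Fin 3)) = {i, k} := by
    ext x
    simp only [Set.mem_compl_iff, Set.mem_singleton_iff, Set.mem_insert_iff]
    exact hcj x
  set α := EuclideanGeometry.angle (s.points j) (s.points i) (s.points k) with hαdef
  set β := EuclideanGeometry.angle (s.points i) (s.points j) (s.points k) with hβdef
  set γ := EuclideanGeometry.angle (s.points i) (s.points k) (s.points j) with hγdef
  -- angle positivity
  have hncolα : ¬ Collinear ℝ ({s.points j, s.points i, s.points k} :
      Set (EuclideanSpace ℝ (Fin 2))) :=
    (affineIndependent_iff_not_collinear_of_ne (Ne.symm hij) hjk hik).1 s.independent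
  have hncolβ : ¬ Collinear ℝ ({s.points i, s.points j, s.points k} :
      Set (EuclideanSpace ℝ (Fin 2))) :=
    (affineIndependent_iff_not_collinear_of_ne hij hik hjk).1 s.independent
  have hncolγ : ¬ Collinear ℝ ({s.points i, s.points k, s.points j} :
      Set (EuclideanSpace ℝ (Fin 2))) :=
    (affineIndependent_iff_not_collinear_of_ne hik hij (Ne.symm hjk)).1 s.independent
  have hαpos : 0 < α := EuclideanGeometry.angle_pos_of_not_collinear hncolα
  have hβpos : 0 < β := EuclideanGeometry.angle_pos_of_not_collinear hncolβ
  have hγpos : 0 < γ := EuclideanGeometry.angle_pos_of_not_collinear hncolγ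
  have hγlt : γ < π := EuclideanGeometry.angle_lt_pi_of_not_collinear hncolγ
  -- angle sum
  have hsum : α + β + γ = π := by
    have h := EuclideanGeometry.angle_add_angle_add_angle_eq_pi
      (p₁ := s.points i) (p₂ := s.points j) (s.points k)
      (hinj.ne (Ne.symm hij))
    rw [EuclideanGeometry.angle_comm (s.points j) (s.points k) (s.points i),
      EuclideanGeometry.angle_comm (s.points k) (s.points i) (s.points j)] at h
    rw [hαdef, hβdef, hγdef]
    linarith [h]
  -- side lengths via law of sines
  have hdij : dist (s.points i) (s.points j) = 2 * R * Real.sin γ :=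
    lawsin i k j hik hij (Ne.symm hjk)
  have hdji : dist (s.points j) (s.points i) = 2 * R * Real.sin γ := by
    rw [dist_comm]; exact hdij
  have hdik : dist (s.points i) (s.points k) = 2 * R * Real.sin β :=
    lawsin i j k hij hik hjk
  have hdjk : dist (s.points j) (s.points k) = 2 * R * Real.sin α :=
    lawsin j i k (Ne.symm hij) hjk hik
  -- altitude conditions in trig form
  have h_i : 2 * l ≤ 2 * R * (Real.sin γ * Real.sin β) := by
    have h := haltEq i j k hjk hset_i
    rw [h, hdij] at hAi
    rw [← mul_assoc]
    exact hAi
  have h_j : 2 * l ≤ 2 * R * (Real.sin γ * Real.sin α) := by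
    have h := haltEq j i k hik hset_j
    rw [h, hdji] at hAj
    rw [← mul_assoc]
    exact hAj
  -- circumradius positive
  have hRpos : 0 < R := by
    have hd : 0 < dist (s.points i) (s.points j) := dist_pos.2 (hinj.ne hij)
    have hsγ : 0 < Real.sin γ := Real.sin_pos_of_pos_of_lt_pi hγpos hγlt
    rw [hdij] at hd
    nlinarith
  have hsγpos : 0 < Real.sin γ := Real.sin_pos_of_pos_of_lt_pi hγpos hγlt
  -- a helper bound
  have boundX : ∀ X : ℝ, 2 * l ≤ 2 * R * X → R ≤ 3 * Real.sqrt 3 * l / 4 →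
      4 * Real.sqrt 3 / 9 ≤ X := by
    intro X h1 h2
    have hXR : l ≤ R * X := by nlinarith
    have hm := mul_le_mul_of_nonneg_left h2 (by positivity : (0:ℝ) ≤ 4 * Real.sqrt 3 / 9)
    have key : 4 * Real.sqrt 3 / 9 * (3 * Real.sqrt 3 * l / 4) = l := by
      linear_combination (l / 3) * s3
    nlinarith [hRpos]
  -- the main inequality
  have main : 3 * Real.sqrt 3 * l / 4 ≤ R := by
    by_contra hcon
    push_neg at hcon
    have hge1 : 4 * Real.sqrt 3 / 9 ≤ Real.sin γ * Real.sin β := boundX _ h_i hcon.le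
    have hge2 : 4 * Real.sqrt 3 / 9 ≤ Real.sin γ * Real.sin α := boundX _ h_j hcon.le
    obtain ⟨hsa, hsb, hsg⟩ := keyTrig hαpos hβpos hγpos hγlt hsum hge2 hge1
    rw [hsg, hsb] at h_i
    have hii : 2 * l ≤ 8 * Real.sqrt 3 / 9 * R := by
      rw [show (8:ℝ) * Real.sqrt 3 / 9 * R = 2 * R * (2 * Real.sqrt 2 / 3 * (Real.sqrt 6 / 3))
        from by linear_combination (-4 * R / 9) * h26]
      exact h_i
    have hmul := mul_lt_mul_of_pos_left hcon
      (by positivity : (0:ℝ) < 8 * Real.sqrt 3 / 9)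
    nlinarith [hii, hmul, s3, hlpos]
  refine ⟨main, ?_, ?_⟩
  · -- equality implies the specific triangle
    intro hReq
    have hge1 : 4 * Real.sqrt 3 / 9 ≤ Real.sin γ * Real.sin β := boundX _ h_i hReq.le
    have hge2 : 4 * Real.sqrt 3 / 9 ≤ Real.sin γ * Real.sin α := boundX _ h_j hReq.le
    obtain ⟨hsa, hsb, hsg⟩ := keyTrig hαpos hβpos hγpos hγlt hsum hge2 hge1
    refine ⟨k, i, j, Ne.symm hik, Ne.symm hjk, hij, ?_, ?_, ?_⟩
    · rw [dist_comm, hdik, hReq, hsb, eq_div_iff (ne_of_gt s2p)]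
      linear_combination (Real.sqrt 6 * l / 2) * h23 + (l / 2) * s6
    · rw [dist_comm, hdjk, hReq, hsa, eq_div_iff (ne_of_gt s2p)]
      linear_combination (Real.sqrt 6 * l / 2) * h23 + (l / 2) * s6
    · rw [hdij, hReq, hsg]
      linear_combination l * h23
  · -- the specific triangle implies equality
    rintro ⟨a, b, c, hab, hac, hbc, hdab, hdac, hdbc⟩
    have hlc := EuclideanGeometry.law_cos (s.points b) (s.points a) (s.points c)
    rw [dist_comm (s.points b) (s.points a), dist_comm (s.points c) (s.points a),
      hdab, hdac, hdbc] at hlc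
    have hsq2 : (3 * l / Real.sqrt 2) * (3 * l / Real.sqrt 2) = 9 * l ^ 2 / 2 := by
      rw [div_mul_div_comm]
      rw [Real.mul_self_sqrt (by norm_num : (0:ℝ) ≤ 2)]
      ring
    rw [hsq2, mul_assoc 2 (3 * l / Real.sqrt 2) (3 * l / Real.sqrt 2), hsq2] at hlc
    have h66 : Real.sqrt 6 * l * (Real.sqrt 6 * l) = 6 * l ^ 2 := by
      linear_combination l ^ 2 * s6
    rw [h66] at hlc
    have hl2pos : (0:ℝ) < 9 * l ^ 2 := by positivity
    have hcos : Real.cos (EuclideanGeometry.angle (s.points b) (s.points a) (s.points c))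
        = 1 / 3 := by
      have h9 : 9 * l ^ 2 * Real.cos (EuclideanGeometry.angle (s.points b) (s.points a)
          (s.points c)) = 9 * l ^ 2 * (1 / 3) := by linear_combination hlc
      exact mul_left_cancel₀ (ne_of_gt hl2pos) h9
    have hsin : Real.sin (EuclideanGeometry.angle (s.points b) (s.points a) (s.points c))
        = 2 * Real.sqrt 2 / 3 := by
      rw [Real.sin_eq_sqrt_one_sub_cos_sq (EuclideanGeometry.angle_nonneg _ _ _)
        (EuclideanGeometry.angle_le_pi _ _ _), hcos]
      apply sqEqOfSq (Real.sqrt_nonneg _) (by positivity)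
      rw [Real.sq_sqrt (by norm_num : (0:ℝ) ≤ 1 - (1 / 3 : ℝ) ^ 2)]
      linear_combination (-4 / 9) * s2
    have hls := lawsin b a c (Ne.symm hab) hbc hac
    rw [hdbc, hsin] at hls
    have h5 : Real.sqrt 2 * (4 * R - 3 * Real.sqrt 3 * l) = 0 := by
      linear_combination (-3) * hls + (-3 * l) * h23
    rcases mul_eq_zero.1 h5 with h | h
    · exact absurd h (ne_of_gt s2p)
    · linarith
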